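/- Let d ≥ 2 and ξ ≥ 1 be integers and let P_ξ^* be the set of integers of the form ∏_{j=1}^ξ p_j^{a_j} with each a_j ∈ {0, 1, …, d−1}, excluding 1, where p_j is the j-th prime. For every positive integer n there exists a function c : P_ξ^* → ℤ, not identically zero, with max_{f ∈ P_ξ^*} |c_f| ≤ n, such that ‖ Σ_{f ∈ P_ξ^*} c_f · f^{1/d} ‖ ≤ n^{−d^ξ + 1}. -/
import Mathlib


/-- `PstarSet d ξ` : the set of integers ∏_{j=1}^ξ p_j^{a_j} with a_j ∈ {0,…,d−1},
excluding 1, where p_j is the j-th prime. -/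
noncomputable def PstarSet (d ξ : ℕ) : Finset ℕ :=
  (Finset.image
    (fun a : Fin ξ → Fin d => ∏ j : Fin ξ, (Nat.nth Nat.Prime (j : ℕ)) ^ ((a j : ℕ)))
    Finset.univ).erase 1

/-- Distance from a real number to the nearest integer. -/
noncomputable def distNearestInt (x : ℝ) : ℝ := |x - round x|

lemma prime_pow_prod_inj (d ξ : ℕ) :
    Function.Injective
      (fun a : Fin ξ → Fin d => ∏ j : Fin ξ, (Nat.nth Nat.Prime (j : ℕ)) ^ ((a j : ℕ))) := by
  have hp : ∀ j : Fin ξ, Nat.Prime (Nat.nth Nat.Prime (j : ℕ)) :=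
    fun j => Nat.prime_nth_prime _
  have key : ∀ (a : Fin ξ → Fin d) (i : Fin ξ),
      (∏ j : Fin ξ, (Nat.nth Nat.Prime (j : ℕ)) ^ ((a j : ℕ))).factorization
        (Nat.nth Nat.Prime (i : ℕ)) = (a i : ℕ) := by
    intro a i
    rw [Nat.factorization_prod (fun j _ => pow_ne_zero _ (hp j).ne_zero)]
    rw [Finset.sum_apply']
    have : ∀ j : Fin ξ,
        ((Nat.nth Nat.Prime (j : ℕ)) ^ ((a j : ℕ))).factorization
          (Nat.nth Nat.Prime (i : ℕ)) = if j = i then (a j : ℕ) else 0 := by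
      intro j
      rw [(hp j).factorization_pow, Finsupp.single_apply]
      congr 1
      simp only [eq_iff_iff]
      constructor
      · intro h
        exact Fin.ext (Nat.nth_injective Nat.infinite_setOf_prime h)
      · intro h; rw [h]
    simp only [this]
    simp
  intro a b h
  dsimp only at h
  funext i
  have := key a i
  rw [h, key b i] at this
  exact Fin.ext this.symm

lemma pstar_card (d ξ : ℕ) (hd : 2 ≤ d) : (PstarSet d ξ).card = d ^ ξ - 1 := by
  have hdpos : 0 < d := by omega
  have h1 : (1 : ℕ) ∈ Finset.image
      (fun a : Fin ξ → Fin d => ∏ j : Fin ξ, (Nat.nth Nat.Prime (j : ℕ)) ^ ((a j : ℕ)))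
      Finset.univ := by
    refine Finset.mem_image.mpr ⟨fun _ => ⟨0, hdpos⟩, Finset.mem_univ _, ?_⟩
    simp
  rw [PstarSet, Finset.card_erase_of_mem h1,
    Finset.card_image_of_injective _ (prime_pow_prod_inj d ξ), Finset.card_univ]
  simp [Fintype.card_fun]

theorem stmt_12 (d ξ : ℕ) (hd : 2 ≤ d) (hξ : 1 ≤ ξ) (n : ℕ) (hn : 1 ≤ n) :
    ∃ c : ℕ → ℤ, (∃ f ∈ PstarSet d ξ, c f ≠ 0) ∧
      (∀ f ∈ PstarSet d ξ, (c f).natAbs ≤ n) ∧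
      distNearestInt (∑ f ∈ PstarSet d ξ, (c f : ℝ) * (f : ℝ) ^ ((d : ℝ)⁻¹)) ≤
        (n : ℝ) ^ (-(d : ℝ) ^ ξ + 1) := by
  classical
  set S := PstarSet d ξ with hS
  set N := S.card with hNdef
  have hcard : N = d ^ ξ - 1 := pstar_card d ξ hd
  have hdx : 2 ≤ d ^ ξ := le_trans hd (Nat.le_self_pow (by omega) d)
  have hNpos : 1 ≤ N := by omega
  -- the sum function
  set Φ : (↥S → Fin (n + 1)) → ℝ :=
    fun v => ∑ s ∈ S.attach, ((v s : ℕ) : ℝ) * ((s : ℕ) : ℝ) ^ ((d : ℝ)⁻¹) with hΦ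
  have htpos : (0 : ℝ) < (n : ℝ) ^ N := by positivity
  set g : (↥S → Fin (n + 1)) → ℤ := fun v => ⌊(n : ℝ) ^ N * Int.fract (Φ v)⌋ with hg
  have hmaps : ∀ v ∈ (Finset.univ : Finset (↥S → Fin (n + 1))),
      g v ∈ Finset.Ico (0 : ℤ) ((n : ℤ) ^ N) := by
    intro v _
    rw [Finset.mem_Ico]
    constructor
    · exact Int.floor_nonneg.mpr (mul_nonneg htpos.le (Int.fract_nonneg _))
    · rw [Int.floor_lt]
      push_cast
      exact mul_lt_of_lt_one_right htpos (Int.fract_lt_one _)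
  have hcardlt : (Finset.Ico (0 : ℤ) ((n : ℤ) ^ N)).card <
      (Finset.univ : Finset (↥S → Fin (n + 1))).card := by
    rw [Int.card_Ico, Finset.card_univ, Fintype.card_fun, Fintype.card_fin, Fintype.card_coe]
    have : ((n : ℤ) ^ N - 0).toNat = n ^ N := by
      rw [sub_zero, ← Nat.cast_pow, Int.toNat_natCast]
    rw [this]
    exact Nat.pow_lt_pow_left (Nat.lt_succ_self n) (by omega)
  obtain ⟨v₁, -, v₂, -, hne, heq⟩ :=
    Finset.exists_ne_map_eq_of_card_lt_of_maps_to hcardlt hmaps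
  -- difference of fractional parts is small
  have hfract : |Int.fract (Φ v₁) - Int.fract (Φ v₂)| < ((n : ℝ) ^ N)⁻¹ := by
    have h1 : (n : ℝ) ^ N * Int.fract (Φ v₁) < (n : ℝ) ^ N * Int.fract (Φ v₂) + 1 := by
      calc (n : ℝ) ^ N * Int.fract (Φ v₁) < (g v₁ : ℝ) + 1 := Int.lt_floor_add_one _
        _ = (g v₂ : ℝ) + 1 := by rw [heq]
        _ ≤ (n : ℝ) ^ N * Int.fract (Φ v₂) + 1 := by
            have := Int.floor_le ((n : ℝ) ^ N * Int.fract (Φ v₂)); linarith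
    have h2 : (n : ℝ) ^ N * Int.fract (Φ v₂) < (n : ℝ) ^ N * Int.fract (Φ v₁) + 1 := by
      calc (n : ℝ) ^ N * Int.fract (Φ v₂) < (g v₂ : ℝ) + 1 := Int.lt_floor_add_one _
        _ = (g v₁ : ℝ) + 1 := by rw [heq]
        _ ≤ (n : ℝ) ^ N * Int.fract (Φ v₁) + 1 := by
            have := Int.floor_le ((n : ℝ) ^ N * Int.fract (Φ v₁)); linarith
    have main : ∀ x y : ℝ, (n : ℝ) ^ N * x < (n : ℝ) ^ N * y + 1 →
        x - y < ((n : ℝ) ^ N)⁻¹ := by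
      intro x y h
      rw [inv_eq_one_div, lt_div_iff₀ htpos]
      nlinarith
    rw [abs_lt]
    constructor
    · have := main _ _ h2; linarith
    · exact main _ _ h1
  -- define c
  set c : ℕ → ℤ := fun f =>
    if hf : f ∈ S then ((v₁ ⟨f, hf⟩ : ℕ) : ℤ) - ((v₂ ⟨f, hf⟩ : ℕ) : ℤ) else 0 with hc
  refine ⟨c, ?_, ?_, ?_⟩
  · obtain ⟨s, hs⟩ := Function.ne_iff.mp hne
    refine ⟨(s : ℕ), s.2, ?_⟩
    rw [hc]
    simp only [s.2, dif_pos, Subtype.coe_eta]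
    rw [sub_ne_zero]
    intro h
    exact hs (Fin.ext (by exact_mod_cast h))
  · intro f hf
    rw [hc]
    simp only [hf, dif_pos]
    have h1 : (v₁ ⟨f, hf⟩ : ℕ) ≤ n := Nat.lt_succ_iff.mp (v₁ ⟨f, hf⟩).2
    have h2 : (v₂ ⟨f, hf⟩ : ℕ) ≤ n := Nat.lt_succ_iff.mp (v₂ ⟨f, hf⟩).2
    omega
  · -- the sum equals Φ v₁ - Φ v₂
    have hsum : ∑ f ∈ S, (c f : ℝ) * (f : ℝ) ^ ((d : ℝ)⁻¹) = Φ v₁ - Φ v₂ := by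
      rw [← Finset.sum_attach S (fun f => (c f : ℝ) * (f : ℝ) ^ ((d : ℝ)⁻¹)), hΦ,
        ← Finset.sum_sub_distrib]
      refine Finset.sum_congr rfl fun s _ => ?_
      rw [hc]
      simp only [s.2, dif_pos, Subtype.coe_eta]
      push_cast
      ring
    rw [hsum]
    set X := Φ v₁ - Φ v₂ with hX
    have hk : |X - ((⌊Φ v₁⌋ - ⌊Φ v₂⌋ : ℤ) : ℝ)| < ((n : ℝ) ^ N)⁻¹ := by
      have : X - ((⌊Φ v₁⌋ - ⌊Φ v₂⌋ : ℤ) : ℝ) = Int.fract (Φ v₁) - Int.fract (Φ v₂) := by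
        rw [Int.fract, Int.fract, hX]; push_cast; ring
      rw [this]; exact hfract
    have hround : distNearestInt X ≤ |X - ((⌊Φ v₁⌋ - ⌊Φ v₂⌋ : ℤ) : ℝ)| :=
      round_le X _
    have hrhs : (n : ℝ) ^ (-(d : ℝ) ^ ξ + 1) = ((n : ℝ) ^ N)⁻¹ := by
      have hNcast : (N : ℝ) = (d : ℝ) ^ ξ - 1 := by
        rw [hcard]
        push_cast [Nat.cast_sub (by omega : 1 ≤ d ^ ξ)]
        ring
      have : (-(d : ℝ) ^ ξ + 1) = -(N : ℝ) := by rw [hNcast]; ring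
      rw [this, Real.rpow_neg (by positivity), Real.rpow_natCast]
    rw [hrhs]
    exact le_of_lt (lt_of_le_of_lt hround hk)
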